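/- The axiom of ∈-Induction is realized in the implicative model: the fixed-point term h := y(λh.λx.x(λy.hx)) belongs to Σ and satisfies h ≤ ⋀_{α∈W}(ε → φ(α)) for any function φ : W → A, where ε := ⋀_{α∈W}((⋀_{u∈dom(α)}(α(u) → φ(u))) → φ(α)). -/
import Mathlib


universe u v

/-- An implicative algebra: a complete lattice with an implication antitone in the
first argument, monotone in the second, distributing over arbitrary meets in the
second argument, together with a separator `Sep` which is upward closed, closed
under modus ponens, and contains the combinators K and S. -/
structure ImplicativeAlgebra (A : Type u) [CompleteLattice A] where
  imp : A → A → A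
  imp_anti : ∀ ⦃a a' b : A⦄, a ≤ a' → imp a' b ≤ imp a b
  imp_mono : ∀ ⦃a b b' : A⦄, b ≤ b' → imp a b ≤ imp a b'
  imp_sInf : ∀ (a : A) (S : Set A), imp a (sInf S) = ⨅ b ∈ S, imp a b
  Sep : Set A
  sep_upward : ∀ ⦃a b : A⦄, a ∈ Sep → a ≤ b → b ∈ Sep
  sep_mp : ∀ ⦃a b : A⦄, imp a b ∈ Sep → a ∈ Sep → b ∈ Sep
  sep_K : (⨅ a : A, ⨅ b : A, imp a (imp b a)) ∈ Sep
  sep_S : (⨅ a : A, ⨅ b : A, ⨅ c : A,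
      imp (imp a (imp b c)) (imp (imp a b) (imp a c))) ∈ Sep

namespace ImplicativeAlgebra

variable {A : Type u} [CompleteLattice A] (𝔸 : ImplicativeAlgebra A)

/-- Application: `a · b := ⋀ {x | a ≤ b → x}`. -/
def app (a b : A) : A := sInf {x : A | a ≤ 𝔸.imp b x}

/-- Implicative conjunction `a × b`. -/
def itimes (a b : A) : A := ⨅ x : A, 𝔸.imp (𝔸.imp a (𝔸.imp b x)) x

/-- Implicative disjunction `a + b`. -/
def iplus (a b : A) : A := ⨅ x : A, 𝔸.imp (𝔸.imp a x) (𝔸.imp (𝔸.imp b x) x)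

/-- Second-order encoding of the existential quantifier. -/
def iexists {ι : Sort v} (f : ι → A) : A := ⨅ x : A, 𝔸.imp (⨅ i, 𝔸.imp (f i) x) x

/-- Encoding of k = λx.λy.x. -/
def kComb : A := ⨅ a : A, 𝔸.imp a (⨅ b : A, 𝔸.imp b a)

/-- Encoding of λx.λy.y. -/
def kbarComb : A := ⨅ a : A, 𝔸.imp a (⨅ b : A, 𝔸.imp b b)

/-- Encoding of the pairing combinator p = λx.λy.λz.zxy. -/
def pComb : A := ⨅ a : A, 𝔸.imp a (⨅ b : A, 𝔸.imp b (⨅ c : A, 𝔸.imp c (𝔸.app (𝔸.app c a) b)))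

/-- Encoding of the first projection p₁ = λu.u k. -/
def p1Comb : A := ⨅ u : A, 𝔸.imp u (𝔸.app u 𝔸.kComb)

/-- Encoding of the second projection p₂ = λv.v k̄. -/
def p2Comb : A := ⨅ u : A, 𝔸.imp u (𝔸.app u 𝔸.kbarComb)

/-- Encoding of the existential-introduction combinator e = λx.λz.zx. -/
def eComb : A := ⨅ a : A, 𝔸.imp a (⨅ c : A, 𝔸.imp c (𝔸.app c a))

end ImplicativeAlgebra

/-- Names of the implicative model of set theory: a name is a (set-indexed)
family of previously constructed names, each labelled by a truth value in `A`
(a partial function from names to `A`, presented as a family). -/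
inductive Name (A : Type u) : Type (u + 1)
  | mk (ι : Type u) (elem : ι → Name A) (val : ι → A) : Name A

namespace Name

/-- The (index set of the) domain of a name. -/
def idx {A : Type u} : Name A → Type u
  | .mk ι _ _ => ι

/-- The elements of the domain of a name. -/
def elem {A : Type u} : (α : Name A) → α.idx → Name A
  | .mk _ e _ => e

/-- The truth value attached to each element of the domain of a name. -/
def val {A : Type u} : (α : Name A) → α.idx → A
  | .mk _ _ v => v

variable {A : Type u} [CompleteLattice A]

/-- `eqPair 𝔸 α β = (α ⊆_W β, β ⊆_W α)`, defined by simultaneous recursion,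
where `α ⊆_W β := ⋀_{t ∈ dom α}(α(t) → t ∈_W β)` and
`t ∈_W β := ∃_{u ∈ dom β}(β(u) × (u =_W t))` and `u =_W t := (u ⊆_W t) × (t ⊆_W u)`. -/
def eqPair (𝔸 : ImplicativeAlgebra A) : Name A → Name A → A × A
  | .mk _ e v, .mk _ e' v' =>
    (⨅ i, 𝔸.imp (v i) (𝔸.iexists fun j => 𝔸.itimes (v' j)
        (𝔸.itimes (eqPair 𝔸 (e i) (e' j)).2 (eqPair 𝔸 (e i) (e' j)).1)),
     ⨅ j, 𝔸.imp (v' j) (𝔸.iexists fun i => 𝔸.itimes (v i)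
        (𝔸.itimes (eqPair 𝔸 (e i) (e' j)).1 (eqPair 𝔸 (e i) (e' j)).2)))

/-- `α ⊆_W β`. -/
def subW (𝔸 : ImplicativeAlgebra A) (α β : Name A) : A := (eqPair 𝔸 α β).1

/-- `α =_W β := (α ⊆_W β) × (β ⊆_W α)`. -/
def eqW (𝔸 : ImplicativeAlgebra A) (α β : Name A) : A :=
  𝔸.itimes (eqPair 𝔸 α β).1 (eqPair 𝔸 α β).2

/-- `α ∈_W β := ∃_{t ∈ dom β}(β(t) × (t =_W α))`. -/
def memW (𝔸 : ImplicativeAlgebra A) (α β : Name A) : A :=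
  𝔸.iexists fun j : β.idx => 𝔸.itimes (β.val j) (eqW 𝔸 (β.elem j) α)

end Name

namespace ImplicativeAlgebra

variable {A : Type u} [CompleteLattice A] (𝔸 : ImplicativeAlgebra A)

lemma app_le' {a b c : A} (h : a ≤ 𝔸.imp b c) : 𝔸.app a b ≤ c := sInf_le h

lemma le_imp_app' (a b : A) : a ≤ 𝔸.imp b (𝔸.app a b) := by
  rw [app, 𝔸.imp_sInf b {x : A | a ≤ 𝔸.imp b x}]
  exact le_iInf₂ fun x hx => hx

lemma app_mono' {a a' b b' : A} (ha : a ≤ a') (hb : b ≤ b') :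
    𝔸.app a b ≤ 𝔸.app a' b' :=
  𝔸.app_le' (ha.trans ((𝔸.le_imp_app' a' b').trans (𝔸.imp_anti hb)))

lemma sep_app' {a b : A} (ha : a ∈ 𝔸.Sep) (hb : b ∈ 𝔸.Sep) :
    𝔸.app a b ∈ 𝔸.Sep :=
  𝔸.sep_mp (𝔸.sep_upward ha (𝔸.le_imp_app' a b)) hb

/-- The K combinator element. -/
def kc : A := ⨅ a : A, ⨅ b : A, 𝔸.imp a (𝔸.imp b a)

/-- The S combinator element. -/
def sc : A := ⨅ a : A, ⨅ b : A, ⨅ c : A,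
  𝔸.imp (𝔸.imp a (𝔸.imp b c)) (𝔸.imp (𝔸.imp a b) (𝔸.imp a c))

lemma kc_sep : 𝔸.kc ∈ 𝔸.Sep := 𝔸.sep_K

lemma sc_sep : 𝔸.sc ∈ 𝔸.Sep := 𝔸.sep_S

lemma app_kc (a b : A) : 𝔸.app (𝔸.app 𝔸.kc a) b ≤ a :=
  𝔸.app_le' (𝔸.app_le' ((iInf_le _ a).trans (iInf_le _ b)))

lemma app_kc_imp (b t : A) : 𝔸.app 𝔸.kc t ≤ 𝔸.imp b t :=
  𝔸.app_le' ((iInf_le _ t).trans (iInf_le _ b))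

lemma app_sc (x y z : A) :
    𝔸.app (𝔸.app (𝔸.app 𝔸.sc x) y) z ≤ 𝔸.app (𝔸.app x z) (𝔸.app y z) := by
  set c := 𝔸.app (𝔸.app x z) (𝔸.app y z) with hc
  have hx : x ≤ 𝔸.imp z (𝔸.imp (𝔸.app y z) c) :=
    (𝔸.le_imp_app' x z).trans (𝔸.imp_mono (𝔸.le_imp_app' _ _))
  have hs : 𝔸.sc ≤ 𝔸.imp (𝔸.imp z (𝔸.imp (𝔸.app y z) c))
      (𝔸.imp (𝔸.imp z (𝔸.app y z)) (𝔸.imp z c)) :=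
    (iInf_le _ z).trans ((iInf_le _ (𝔸.app y z)).trans (iInf_le _ c))
  have h1 : 𝔸.app 𝔸.sc x ≤ 𝔸.imp (𝔸.imp z (𝔸.app y z)) (𝔸.imp z c) :=
    𝔸.app_le' (hs.trans (𝔸.imp_anti hx))
  have h2 : 𝔸.app (𝔸.app 𝔸.sc x) y ≤ 𝔸.imp z c :=
    𝔸.app_le' (h1.trans (𝔸.imp_anti (𝔸.le_imp_app' y z)))
  exact 𝔸.app_le' h2

/-- A fixed point `h = y(λh.λx. x (k (h x)))` of the ∈-induction functional. -/
lemma exists_fix : ∃ h ∈ 𝔸.Sep, ∀ e : A,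
    𝔸.app h e ≤ 𝔸.app e (𝔸.app 𝔸.kc (𝔸.app h e)) := by
  classical
  set K := 𝔸.kc with hK
  set S := 𝔸.sc with hSdef
  set ap := 𝔸.app with hap
  set I : A := ap (ap S K) K with hIdef
  have hI : ∀ a, ap I a ≤ a := fun a =>
    (𝔸.app_sc K K a).trans (𝔸.app_kc a (ap K a))
  set SII : A := ap (ap S I) I with hSII
  set V : A := ap (ap S (ap K S)) (ap (ap S (ap K K)) SII) with hV
  set U : A := ap (ap S V) (ap K I) with hU
  set T : A := ap (ap S (ap K (ap S (ap K K)))) U with hT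
  set w : A := ap (ap S (ap K (ap S I))) T with hw
  have hVle : ∀ x : A, ap V x ≤ ap S (ap K (ap x x)) := by
    intro x
    have hSIIx : ap SII x ≤ ap x x :=
      (𝔸.app_sc I I x).trans (𝔸.app_mono' (hI x) (hI x))
    have hMx : ap (ap (ap S (ap K K)) SII) x ≤ ap K (ap x x) :=
      (𝔸.app_sc (ap K K) SII x).trans
        (𝔸.app_mono' (𝔸.app_kc K x) hSIIx)
    exact (𝔸.app_sc (ap K S) _ x).trans
      (𝔸.app_mono' (𝔸.app_kc S x) hMx)
  have hUle : ∀ x : A, ap U x ≤ ap (ap S (ap K (ap x x))) I := fun x =>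
    (𝔸.app_sc V (ap K I) x).trans (𝔸.app_mono' (hVle x) (𝔸.app_kc I x))
  have hTle : ∀ x : A, ap T x ≤ ap (ap S (ap K K)) (ap (ap S (ap K (ap x x))) I) :=
    fun x => (𝔸.app_sc (ap K (ap S (ap K K))) U x).trans
      (𝔸.app_mono' (𝔸.app_kc (ap S (ap K K)) x) (hUle x))
  have hwle : ∀ x : A, ap w x ≤
      ap (ap S I) (ap (ap S (ap K K)) (ap (ap S (ap K (ap x x))) I)) := fun x =>
    (𝔸.app_sc (ap K (ap S I)) T x).trans
      (𝔸.app_mono' (𝔸.app_kc (ap S I) x) (hTle x))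
  have hE : ∀ x e : A,
      ap (ap (ap S I) (ap (ap S (ap K K)) (ap (ap S (ap K (ap x x))) I))) e ≤
        ap e (ap K (ap (ap x x) e)) := by
    intro x e
    have hNe : ap (ap (ap S (ap K (ap x x))) I) e ≤ ap (ap x x) e :=
      (𝔸.app_sc (ap K (ap x x)) I e).trans
        (𝔸.app_mono' (𝔸.app_kc (ap x x) e) (hI e))
    have hMe : ap (ap (ap S (ap K K)) (ap (ap S (ap K (ap x x))) I)) e ≤
        ap K (ap (ap x x) e) :=
      (𝔸.app_sc (ap K K) _ e).trans (𝔸.app_mono' (𝔸.app_kc K e) hNe)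
    exact (𝔸.app_sc I _ e).trans (𝔸.app_mono' (hI e) hMe)
  refine ⟨ap w w, ?_, ?_⟩
  · have hKs : K ∈ 𝔸.Sep := 𝔸.kc_sep
    have hSs : S ∈ 𝔸.Sep := 𝔸.sc_sep
    have hIs : I ∈ 𝔸.Sep := 𝔸.sep_app' (𝔸.sep_app' hSs hKs) hKs
    have hSIIs : SII ∈ 𝔸.Sep := 𝔸.sep_app' (𝔸.sep_app' hSs hIs) hIs
    have hVs : V ∈ 𝔸.Sep :=
      𝔸.sep_app' (𝔸.sep_app' hSs (𝔸.sep_app' hKs hSs))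
        (𝔸.sep_app' (𝔸.sep_app' hSs (𝔸.sep_app' hKs hKs)) hSIIs)
    have hUs : U ∈ 𝔸.Sep :=
      𝔸.sep_app' (𝔸.sep_app' hSs hVs) (𝔸.sep_app' hKs hIs)
    have hTs : T ∈ 𝔸.Sep :=
      𝔸.sep_app' (𝔸.sep_app' hSs (𝔸.sep_app' hKs
        (𝔸.sep_app' hSs (𝔸.sep_app' hKs hKs)))) hUs
    have hws : w ∈ 𝔸.Sep :=
      𝔸.sep_app' (𝔸.sep_app' hSs (𝔸.sep_app' hKs (𝔸.sep_app' hSs hIs))) hTs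
    exact 𝔸.sep_app' hws hws
  · intro e
    calc ap (ap w w) e ≤
        ap (ap (ap S I) (ap (ap S (ap K K)) (ap (ap S (ap K (ap w w))) I))) e :=
          𝔸.app_mono' (hwle w) le_rfl
      _ ≤ ap e (ap K (ap (ap w w) e)) := hE w e

end ImplicativeAlgebra

/-- the axiom of ∈-induction is realized in the implicative
model: there is h ∈ Σ such that for every φ : W → A,
h ≤ ⋀_{α∈W}(ε → φ(α)) where ε := ⋀_{α∈W}((⋀_{u∈dom α}(α(u) → φ(u))) → φ(α)). -/
theorem mem_induction_realized {A : Type u} [CompleteLattice A]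
    (𝔸 : ImplicativeAlgebra A) :
    ∃ h ∈ 𝔸.Sep, ∀ φ : Name A → A,
      h ≤ ⨅ α : Name A,
        𝔸.imp
          (⨅ β : Name A,
            𝔸.imp (⨅ u : β.idx, 𝔸.imp (β.val u) (φ (β.elem u))) (φ β))
          (φ α) := by
  obtain ⟨h, hS, hfix⟩ := 𝔸.exists_fix
  refine ⟨h, hS, fun φ => le_iInf fun α => ?_⟩
  set ε := ⨅ β : Name A,
    𝔸.imp (⨅ u : β.idx, 𝔸.imp (β.val u) (φ (β.elem u))) (φ β) with hε
  have key : ∀ α : Name A, 𝔸.app h ε ≤ φ α := by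
    intro α
    induction α with
    | mk ι e v ih =>
      have ht : 𝔸.app 𝔸.kc (𝔸.app h ε) ≤ ⨅ i : ι, 𝔸.imp (v i) (φ (e i)) :=
        le_iInf fun i => (𝔸.app_kc_imp (v i) _).trans (𝔸.imp_mono (ih i))
      have hεle : ε ≤ 𝔸.imp (𝔸.app 𝔸.kc (𝔸.app h ε)) (φ (Name.mk ι e v)) := by
        have h1 : ε ≤ 𝔸.imp
            (⨅ u : (Name.mk ι e v).idx,
              𝔸.imp ((Name.mk ι e v).val u) (φ ((Name.mk ι e v).elem u)))
            (φ (Name.mk ι e v)) := iInf_le _ (Name.mk ι e v)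
        have h2 : (⨅ i : ι, 𝔸.imp (v i) (φ (e i))) =
            ⨅ u : (Name.mk ι e v).idx,
              𝔸.imp ((Name.mk ι e v).val u) (φ ((Name.mk ι e v).elem u)) := rfl
        exact h1.trans (𝔸.imp_anti (ht.trans_eq h2))
      exact (hfix ε).trans (𝔸.app_le' hεle)
  exact (𝔸.le_imp_app' h ε).trans (𝔸.imp_mono (key α))
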